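/- arXiv:1211.4468 — 4 statements merged into one kernel-verified Lean document; each statement's English description precedes it below -/
import Mathlib

section
/- For any integer n ≥ 1, lcm(1, 2, ..., n) ≥ 2^(n-1). -/
open Finset

lemma beta_identity (m : ℕ) : ∀ k : ℕ,
    ∑ i ∈ range (m + 1), (-1 : ℚ) ^ i * ((m.choose i : ℚ)) / ((k : ℚ) + 1 + i)
      = 1 / (((m + k + 1 : ℕ) : ℚ) * (((m + k).choose k : ℚ))) := by
  induction m with
  | zero => intro k; simp
  | succ m ih =>
    intro k
    have hA : ∑ i ∈ range (m + 2), (-1 : ℚ) ^ i * (((m+1).choose i : ℚ)) / ((k : ℚ) + 1 + i)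
        = (∑ i ∈ range (m + 1), (-1 : ℚ) ^ i * ((m.choose i : ℚ)) / ((k : ℚ) + 1 + i))
          - ∑ i ∈ range (m + 1), (-1 : ℚ) ^ i * ((m.choose i : ℚ)) / (((k:ℚ)+1) + 1 + i) := by
      rw [Finset.sum_range_succ' (fun i => (-1 : ℚ) ^ i * (((m+1).choose i : ℚ)) / ((k : ℚ) + 1 + i)) (m+1)]
      push_cast
      have this1 : ∀ i ∈ range (m+1),
          (-1 : ℚ) ^ (i+1) * (((m+1).choose (i+1) : ℚ)) / ((k : ℚ) + 1 + (i+1))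
          = (-1 : ℚ) ^ (i+1) * ((m.choose (i+1) : ℚ)) / ((k : ℚ) + 1 + (i+1))
            - (-1 : ℚ) ^ i * ((m.choose i : ℚ)) / (((k:ℚ)+1) + 1 + i) := by
        intro i _
        rw [Nat.choose_succ_succ]
        push_cast
        ring
      rw [Finset.sum_congr rfl this1, Finset.sum_sub_distrib]
      have hshift : ∑ x ∈ range (m+1), (-1:ℚ)^(x+1) * ((m.choose (x+1) : ℚ)) / ((k:ℚ)+1+(x+1))
          = (∑ i ∈ range (m+1), (-1:ℚ)^i * ((m.choose i : ℚ))/((k:ℚ)+1+i)) - 1/((k:ℚ)+1) := by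
        rw [Finset.sum_range_succ]
        rw [Finset.sum_range_succ' (fun i => (-1:ℚ)^i * ((m.choose i : ℚ))/((k:ℚ)+1+i)) m]
        push_cast
        simp [Nat.choose_succ_self]
      rw [hshift]
      simp
      ring
    rw [hA, ih k]
    have ih2 := ih (k+1)
    simp only [show ((k+1:ℕ):ℚ) = (k:ℚ)+1 from by push_cast; ring] at ih2
    rw [ih2]
    simp only [show m+(k+1) = m+k+1 from by omega, show m+1+k = m+k+1 from by omega,
      show m+1+(k+1) = m+k+2 from by omega, show m+1+k+1 = m+k+2 from by omega,
      show m+(k+1)+1 = m+k+2 from by omega]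
    push_cast
    have h1 : ((m+k+1) * (m+k).choose k : ℕ) = ((m+k+1).choose (k+1) * (k+1) : ℕ) :=
      Nat.add_one_mul_choose_eq (m+k) k
    have h2 : ((m+k+2) * (m+k+1).choose k : ℕ) = ((m+k+2).choose (k+1) * (k+1) : ℕ) :=
      Nat.add_one_mul_choose_eq (m+k+1) k
    have h3 : ((m+k+1).choose (k+1) * (m+k+2) : ℕ) = ((m+k+2).choose (k+1) * (m+1) : ℕ) := by
      have := Nat.choose_mul_succ_eq (m+k+1) (k+1)
      simpa [show m+k+1+1 - (k+1) = m+1 by omega, show m+k+1+1 = m+k+2 by ring] using this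
    have hc1 : (0:ℚ) < ((m+k).choose k : ℚ) := by
      exact_mod_cast Nat.choose_pos (by omega)
    have hc2 : (0:ℚ) < ((m+k+1).choose (k+1) : ℚ) := by
      exact_mod_cast Nat.choose_pos (by omega)
    have hc3 : (0:ℚ) < ((m+k+1).choose k : ℚ) := by
      exact_mod_cast Nat.choose_pos (by omega)
    have hc4 : (0:ℚ) < ((m+k+2).choose (k+1) : ℚ) := by
      exact_mod_cast Nat.choose_pos (by omega)
    have h1' : ((m:ℚ)+k+1) * ((m+k).choose k : ℚ) = ((m+k+1).choose (k+1) : ℚ) * ((k:ℚ)+1) := by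
      exact_mod_cast h1
    have h2' : ((m:ℚ)+k+2) * ((m+k+1).choose k : ℚ) = ((m+k+2).choose (k+1) : ℚ) * ((k:ℚ)+1) := by
      exact_mod_cast h2
    have h3' : ((m+k+1).choose (k+1) : ℚ) * ((m:ℚ)+k+2) = ((m+k+2).choose (k+1) : ℚ) * ((m:ℚ)+1) := by
      exact_mod_cast h3
    have hk : (0:ℚ) < (k:ℚ)+1 := by positivity
    have hmk : (0:ℚ) < (m:ℚ)+k+1 := by positivity
    have hmk2 : (0:ℚ) < (m:ℚ)+k+2 := by positivity
    have h4 : ((m+k+1).choose (k+1) * (k+1) : ℕ) = (m+k+1).choose k * (m+1) := by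
      have := Nat.choose_succ_right_eq (m+k+1) k
      rwa [show m+k+1-k = m+1 by omega] at this
    have h4' : ((m+k+1).choose (k+1) : ℚ) * ((k:ℚ)+1) = ((m+k+1).choose k : ℚ) * ((m:ℚ)+1) := by
      exact_mod_cast h4
    field_simp
    linear_combination (-((m+k+1).choose k : ℚ) - ((m+k+1).choose (k+1) : ℚ)) * h1'
      - ((m+k+1).choose (k+1) : ℚ) * h4'

lemma dvd_lcm_key (n k : ℕ) (hn : 1 ≤ n) (hk : k ≤ n - 1) :
    n * ((n-1).choose k) ∣ Finset.lcm (Finset.Icc 1 n) id := by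
  set L := Finset.lcm (Finset.Icc 1 n) id with hL
  have hdvd : ∀ j, 1 ≤ j → j ≤ n → j ∣ L := by
    intro j h1 h2
    exact Finset.dvd_lcm (Finset.mem_Icc.mpr ⟨h1, h2⟩)
  set m := n - 1 - k with hm
  have hmk : m + k + 1 = n := by omega
  have hbeta := beta_identity m k
  rw [hmk] at hbeta
  have hcast : ∀ i ∈ range (m+1), (((L / (k+1+i) : ℕ)) : ℚ) = (L : ℚ) / ((k:ℚ)+1+i) := by
    intro i hi
    have hi' : i ≤ m := by simpa [Nat.lt_succ_iff] using hi
    have hd : (k+1+i) ∣ L := hdvd _ (by omega) (by omega)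
    rw [Nat.cast_div hd (by positivity)]
    push_cast
    ring
  set S : ℤ := ∑ i ∈ range (m+1), (-1:ℤ)^i * (m.choose i : ℤ) * ((L / (k+1+i) : ℕ) : ℤ) with hS
  have hCpos : 0 < (n-1).choose k := Nat.choose_pos hk
  have hnC : (0:ℚ) < ((n : ℚ) * (((n-1).choose k : ℚ))) := by
    have : (0:ℚ) < (n:ℚ) := by exact_mod_cast hn
    have : (0:ℚ) < (((n-1).choose k : ℚ)) := by exact_mod_cast hCpos
    positivity
  have hmn : m + k = n - 1 := by omega
  have hSQ : (S : ℚ) = (L : ℚ) / ((n : ℚ) * (((n-1).choose k : ℚ))) := by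
    have h0 : (S:ℚ) = ∑ i ∈ range (m+1), (-1:ℚ)^i * ((m.choose i : ℕ):ℚ) * (((L/(k+1+i):ℕ)):ℚ) := by
      simp only [hS, Int.cast_sum, Int.cast_mul, Int.cast_pow, Int.cast_neg, Int.cast_one,
        Int.cast_natCast]
    rw [h0]
    rw [Finset.sum_congr rfl (fun i hi => by
      rw [hcast i hi])]
    rw [show ∑ i ∈ range (m+1), (-1:ℚ)^i * (m.choose i : ℚ) * ((L:ℚ) / ((k:ℚ)+1+i))
        = (L:ℚ) * ∑ i ∈ range (m+1), (-1:ℚ)^i * (m.choose i : ℚ) / ((k:ℚ)+1+i) from by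
      rw [Finset.mul_sum]; exact Finset.sum_congr rfl (fun i _ => by ring)]
    rw [hbeta, hmn]
    ring
  have hLS : (L : ℚ) = ((n : ℚ) * (((n-1).choose k : ℚ))) * (S : ℚ) := by
    rw [hSQ]
    field_simp
  have hLZ : (L : ℤ) = ((n * ((n-1).choose k) : ℕ) : ℤ) * S := by
    exact_mod_cast hLS
  have : ((n * ((n-1).choose k) : ℕ) : ℤ) ∣ (L : ℤ) := ⟨S, hLZ⟩
  exact_mod_cast this

theorem lcm_range_ge_two_pow (n : ℕ) (hn : 1 ≤ n) :
    Finset.lcm (Finset.Icc 1 n) id ≥ 2 ^ (n - 1) := by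
  set L := Finset.lcm (Finset.Icc 1 n) id with hL
  have hLpos : 0 < L := by
    rcases Nat.eq_zero_or_pos L with h | h
    · exfalso
      have := Finset.lcm_eq_zero_iff.mp h
      simp only [Set.mem_image, Finset.mem_coe, Finset.mem_Icc, id] at this
      obtain ⟨x, ⟨hx1, _⟩, hx0⟩ := this
      omega
    · exact h
  have hdvd := dvd_lcm_key n ((n-1)/2) hn (Nat.div_le_self _ _)
  have hge : n * ((n-1).choose ((n-1)/2)) ≤ L := Nat.le_of_dvd hLpos hdvd
  have hsum : 2 ^ (n-1) ≤ n * ((n-1).choose ((n-1)/2)) := by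
    have h1 : 2 ^ (n-1) = ∑ i ∈ range ((n-1)+1), (n-1).choose i := (Nat.sum_range_choose (n-1)).symm
    rw [h1]
    calc ∑ i ∈ range ((n-1)+1), (n-1).choose i
        ≤ ∑ _i ∈ range ((n-1)+1), (n-1).choose ((n-1)/2) :=
          Finset.sum_le_sum (fun i _ => Nat.choose_le_middle i (n-1))
      _ = ((n-1)+1) * ((n-1).choose ((n-1)/2)) := by
          rw [Finset.sum_const, Finset.card_range, smul_eq_mul]
      _ = n * ((n-1).choose ((n-1)/2)) := by rw [show (n-1)+1 = n from by omega]
  exact le_trans hsum hge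
end

section
/- Let a, l ≥ 2 be integers. For any integers α ≥ a, r ≥ max(a, l-1), and n ≥ l·α·r, we have n - k_n > ((l-1)·α + a - l)·r. -/
set_option maxHeartbeats 1000000

theorem n_sub_kn_gt (a l α r n u0 : ℕ) (ha : 2 ≤ a) (hl : 2 ≤ l)
    (hα : a ≤ α) (hr : max a (l - 1) ≤ r) (hn : l * α * r ≤ n) (hu0 : 0 < u0) :
    let kn : ℤ := max 0 (Int.fdiv ((n : ℤ) - (u0 : ℤ)) ((r : ℤ) + 1) + 1)
    (n : ℤ) - kn > (((l : ℤ) - 1) * (α : ℤ) + (a : ℤ) - (l : ℤ)) * (r : ℤ) := by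
  intro kn
  have hra : a ≤ r := le_trans (le_max_left _ _) hr
  have hrl : l - 1 ≤ r := le_trans (le_max_right _ _) hr
  have hA : (2:ℤ) ≤ a := by exact_mod_cast ha
  have hL : (2:ℤ) ≤ l := by exact_mod_cast hl
  have hAl : (a:ℤ) ≤ α := by exact_mod_cast hα
  have hRa : (a:ℤ) ≤ r := by exact_mod_cast hra
  have hRl : (l:ℤ) - 1 ≤ r := by
    have : ((l-1:ℕ):ℤ) ≤ r := by exact_mod_cast hrl
    omega
  have hN : (l:ℤ) * α * r ≤ n := by exact_mod_cast hn
  have hU : (1:ℤ) ≤ u0 := by exact_mod_cast hu0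
  have hRpos : (0:ℤ) < (r:ℤ) + 1 := by linarith
  set q : ℤ := Int.fdiv ((n:ℤ) - u0) ((r:ℤ)+1) with hq
  have hq' : ((r:ℤ)+1) * q ≤ (n:ℤ) - u0 := by
    rw [hq, Int.fdiv_eq_ediv_of_nonneg _ (le_of_lt hRpos), mul_comm]
    exact Int.ediv_mul_le _ (by linarith)
  have hkey2 : (2:ℤ) ≤ ((α:ℤ) - a + l) * ((r:ℤ) - ((l:ℤ) - 1)) + (l:ℤ) * ((l:ℤ) - a) := by
    rcases le_or_gt (a:ℤ) ((l:ℤ) - 1) with hcase | hcase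
    · have h0 : (0:ℤ) ≤ ((α:ℤ) - a + l) * ((r:ℤ) - ((l:ℤ) - 1)) :=
        mul_nonneg (by linarith) (by linarith)
      nlinarith
    · have hbd : (l:ℤ) * ((a:ℤ) - l + 1) ≤ ((α:ℤ) - a + l) * ((r:ℤ) - ((l:ℤ) - 1)) :=
        mul_le_mul (by linarith) (by linarith) (by linarith) (by linarith)
      nlinarith
  have h2 : (2:ℤ) * r ≤ (r:ℤ) * (((α:ℤ) - a + l) * ((r:ℤ) - ((l:ℤ) - 1)) + (l:ℤ) * ((l:ℤ) - a)) := by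
    nlinarith
  have h1 : (r:ℤ) * ((l:ℤ) * α * r) ≤ r * n :=
    mul_le_mul_of_nonneg_left hN (by linarith)
  have key : (((l:ℤ) - 1) * α + a - l) * r * ((r:ℤ)+1) + r + 1 ≤ r * n := by nlinarith
  have hknle : kn ≤ max 0 (q + 1) := le_of_eq rfl
  rcases le_or_gt (q + 1) 0 with hc | hc
  · have hkn0 : kn ≤ 0 := hknle.trans (le_of_eq (max_eq_left hc))
    nlinarith
  · have hkn1 : kn ≤ q + 1 := hknle.trans (le_of_eq (max_eq_right (by linarith)))
    have hql : q < (n:ℤ) - (((l:ℤ) - 1) * α + a - l) * r - 1 := by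
      have ha2 : ((r:ℤ)+1) * q ≤ (n:ℤ) - 1 := by linarith
      have ha3 : (n:ℤ) - 1 < ((r:ℤ)+1) * ((n:ℤ) - (((l:ℤ) - 1) * α + a - l) * r - 1) := by
        nlinarith
      exact lt_of_mul_lt_mul_left (lt_of_le_of_lt ha2 ha3) (le_of_lt hRpos)
    have : kn < (n:ℤ) - (((l:ℤ) - 1) * α + a - l) * r := by omega
    linarith
end

section
/- Let a, l ≥ 2 be integers. For any integers α ≥ a, r ≥ max(a, l-1), and n ≥ l·α·r, we have L_n ≥ u_0 · r^((l-1)·α + a - l) · (r+1)^n. -/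
open Finset

private lemma prod_erase_zero (f : ℕ → ℤ) {n i : ℕ} (hi : i < n) :
    ∏ j ∈ (Finset.range (n+1)).erase (i+1), f j
      = f 0 * ∏ j ∈ (Finset.range n).erase i, f (j+1) := by
  have h0 : (0:ℕ) ∈ (Finset.range (n+1)).erase (i+1) := by simp
  rw [← Finset.mul_prod_erase _ f h0]
  have hset : ((Finset.range (n+1)).erase (i+1)).erase 0
      = ((Finset.range n).erase i).image (fun x => x + 1) := by
    ext x
    simp only [Finset.mem_erase, Finset.mem_range, Finset.mem_image]
    constructor
    · rintro ⟨hx0, hxi, hxn⟩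
      exact ⟨x - 1, ⟨by omega, by omega⟩, by omega⟩
    · rintro ⟨a, ⟨ha1, ha2⟩, rfl⟩
      omega
  rw [hset, Finset.prod_image (fun x _ y _ h => by omega)]

private lemma prod_erase_top (f : ℕ → ℤ) {n i : ℕ} (hi : i < n) :
    ∏ j ∈ (Finset.range (n+1)).erase i, f j
      = f n * ∏ j ∈ (Finset.range n).erase i, f j := by
  have h0 : n ∈ (Finset.range (n+1)).erase i := by simp; omega
  rw [← Finset.mul_prod_erase _ f h0]
  have hset : ((Finset.range (n+1)).erase i).erase n = (Finset.range n).erase i := by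
    ext x
    simp only [Finset.mem_erase, Finset.mem_range]
    omega
  rw [hset]

private lemma key_identity (r : ℤ) : ∀ (m : ℕ) (u : ℤ),
    ∑ i ∈ Finset.range (m+1), (-1)^i * (m.choose i : ℤ) *
      ∏ j ∈ (Finset.range (m+1)).erase i, (u + j * r)
    = (m.factorial : ℤ) * r^m := by
  intro m
  induction m with
  | zero => intro u; simp
  | succ m ih =>
    intro u
    rw [Finset.sum_range_succ']
    have hsplit : ∀ i ∈ Finset.range (m+1),
        (-1)^(i+1) * ((m+1).choose (i+1) : ℤ) *
          ∏ j ∈ (Finset.range (m+2)).erase (i+1), (u + j * r)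
        = ((-1)^(i+1) * (m.choose (i+1) : ℤ) *
            ∏ j ∈ (Finset.range (m+2)).erase (i+1), (u + j * r))
          + (-u) * ((-1)^i * (m.choose i : ℤ) *
            ∏ j ∈ (Finset.range (m+1)).erase i, ((u + r) + j * r)) := by
      intro i hi
      simp only [Finset.mem_range] at hi
      have hch : (((m+1).choose (i+1) : ℕ) : ℤ)
          = (m.choose i : ℤ) + (m.choose (i+1) : ℤ) := by
        rw [Nat.choose_succ_succ]; push_cast; ring
      have hprod : ∏ j ∈ (Finset.range (m+2)).erase (i+1), (u + j * r)
          = u * ∏ j ∈ (Finset.range (m+1)).erase i, ((u + r) + j * r) := by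
        rw [prod_erase_zero (fun j => u + j * r) (by omega : i < m+1)]
        have : ∀ j ∈ (Finset.range (m+1)).erase i,
            u + ((j:ℕ)+1 : ℕ) * r = (u + r) + j * r := by
          intro j _; push_cast; ring
        rw [Finset.prod_congr rfl this]
        push_cast; ring
      rw [hch, hprod]
      ring
    rw [Finset.sum_congr rfl hsplit, Finset.sum_add_distrib, ← Finset.mul_sum, ih (u + r)]
    have hA : (∑ i ∈ Finset.range (m+1), (-1)^(i+1) * (m.choose (i+1) : ℤ) *
          ∏ j ∈ (Finset.range (m+2)).erase (i+1), (u + j * r))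
        + (-1)^0 * ((m+1).choose 0 : ℤ) *
          ∏ j ∈ (Finset.range (m+1+1)).erase 0, (u + j * r)
        = (u + (m+1) * r) * ((m.factorial : ℤ) * r^m) := by
      have e1 : (-1:ℤ)^0 * ((m+1).choose 0 : ℤ) *
          ∏ j ∈ (Finset.range (m+1+1)).erase 0, (u + j * r)
          = (-1)^0 * (m.choose 0 : ℤ) *
          ∏ j ∈ (Finset.range (m+2)).erase 0, (u + j * r) := by
        norm_num
      rw [e1, ← Finset.sum_range_succ' (fun i => (-1)^i * (m.choose i : ℤ) *
          ∏ j ∈ (Finset.range (m+2)).erase i, (u + j * r)) (m+1)]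
      rw [Finset.sum_range_succ]
      simp only [Nat.choose_succ_self, Nat.cast_zero, mul_zero, zero_mul, add_zero]
      rw [← ih u, Finset.mul_sum]
      apply Finset.sum_congr rfl
      intro i hi
      simp only [Finset.mem_range] at hi
      rw [prod_erase_top (fun j => u + j * r) (by omega : i < m+1)]
      push_cast
      ring
    push_cast [Nat.factorial_succ] at hA ⊢
    linear_combination hA

private lemma prod_dvd_fact_mul_lcm (u0 r n k m : ℕ) (hkm : k + m ≤ n) (hgcd : Nat.gcd u0 r = 1) :
    (∏ j ∈ Finset.range (m+1), (u0 + (k+j)*r)) ∣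
      m.factorial * Finset.lcm (Finset.range (n+1)) (fun i => u0 + i * r) := by
  set L := Finset.lcm (Finset.range (n+1)) (fun i => u0 + i * r) with hLdef
  have hL : ∀ j, j ≤ n → (u0 + j*r) ∣ L := fun j hj =>
    Finset.dvd_lcm (Finset.mem_range.mpr (by omega))
  set P := ∏ j ∈ Finset.range (m+1), (u0 + (k+j)*r) with hPdef
  -- ℤ-level divisibility including r^m
  have key := key_identity (r:ℤ) m ((u0:ℤ) + k * r)
  have hdvdZ : (P:ℤ) ∣ ((m.factorial : ℤ) * r^m) * L := by
    rw [← key, Finset.sum_mul]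
    apply Finset.dvd_sum
    intro i hi
    have hiq : i ∈ Finset.range (m+1) := hi
    -- ℕ-level: P ∣ Q_i * L
    have hQ : P ∣ (∏ j ∈ (Finset.range (m+1)).erase i, (u0 + (k+j)*r)) * L := by
      have h1 : P = (u0 + (k+i)*r) * ∏ j ∈ (Finset.range (m+1)).erase i, (u0 + (k+j)*r) :=
        (Finset.mul_prod_erase _ _ hiq).symm
      rw [h1, mul_comm ((u0 + (k+i)*r)) _]
      exact Nat.mul_dvd_mul_left _ (hL (k+i) (by simp at hiq; omega))
    have hQZ : (P:ℤ) ∣ ((∏ j ∈ (Finset.range (m+1)).erase i, (u0 + (k+j)*r) : ℕ) : ℤ) * (L:ℤ) := by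
      have := Int.natCast_dvd_natCast.mpr hQ
      push_cast at this
      exact_mod_cast this
    have hprodeq : (∏ j ∈ (Finset.range (m+1)).erase i, ((u0:ℤ) + k * r + j * r))
        = ((∏ j ∈ (Finset.range (m+1)).erase i, (u0 + (k+j)*r) : ℕ) : ℤ) := by
      push_cast
      apply Finset.prod_congr rfl
      intro j _
      ring
    rw [mul_assoc, hprodeq]
    exact Dvd.dvd.mul_left hQZ _
  -- back to ℕ
  have hdvdN : P ∣ (m.factorial * L) * r^m := by
    have : (P:ℤ) ∣ (((m.factorial * L) * r^m : ℕ) : ℤ) := by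
      push_cast
      convert hdvdZ using 1
      ring
    exact_mod_cast this
  have hcop : Nat.Coprime P r := by
    apply Nat.Coprime.prod_left
    intro j _
    exact (Nat.coprime_add_mul_right_left u0 r (k+j)).mpr hgcd
  exact (Nat.Coprime.pow_right m hcop).dvd_of_dvd_mul_right hdvdN

private lemma pow_div_dvd_factorial (r m : ℕ) (hr : 0 < r) : r ^ (m / r) ∣ m.factorial := by
  set t := m / r with ht
  have h1 : ∏ i ∈ Finset.Icc 1 t, (i * r) = t.factorial * r ^ t := by
    rw [Finset.prod_mul_distrib, Finset.prod_const, Nat.card_Icc,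
      ← Finset.Ico_add_one_right_eq_Icc, Finset.prod_Ico_id_eq_factorial]
    simp
  have h2 : (∏ i ∈ Finset.Icc 1 t, (i * r)) ∣ m.factorial := by
    rw [← Finset.prod_Ico_id_eq_factorial, Finset.Ico_add_one_right_eq_Icc]
    have hinj : ∀ x ∈ Finset.Icc 1 t, ∀ y ∈ Finset.Icc 1 t, x * r = y * r → x = y := by
      intro x _ y _ h
      exact Nat.eq_of_mul_eq_mul_right hr h
    have h3 : ∏ i ∈ Finset.Icc 1 t, (i*r)
        = ∏ x ∈ (Finset.Icc 1 t).image (fun i => i * r), x :=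
      (Finset.prod_image (f := fun x => x) hinj).symm
    rw [h3]
    apply Finset.prod_dvd_prod_of_subset
    intro x hx
    simp only [Finset.mem_image, Finset.mem_Icc] at hx ⊢
    obtain ⟨i, ⟨hi1, hi2⟩, rfl⟩ := hx
    constructor
    · exact Nat.one_le_iff_ne_zero.mpr (by positivity)
    · calc i * r ≤ t * r := Nat.mul_le_mul_right r hi2
        _ = m / r * r := by rw [ht]
        _ ≤ m := Nat.div_mul_le_self m r
  exact dvd_trans (Dvd.intro_left _ (by rw [← h1])) h2

/-- minimal k with n - k ≤ u0 + k*r , i.e. ceil((n-u0)/(r+1)) -/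
private def kf (u0 r n : ℕ) : ℕ := (n - u0 + r) / (r + 1)

private lemma kf_spec (u0 r n : ℕ) : n ≤ u0 + kf u0 r n * (r + 1) := by
  have h1 := Nat.div_add_mod' (n - u0 + r) (r + 1)
  have h2 := Nat.mod_lt (n - u0 + r) (show 0 < r+1 by omega)
  unfold kf
  set d := (n - u0 + r) / (r + 1) with hd
  set q := d * (r + 1) with hq
  omega

private lemma kf_le (u0 r n : ℕ) (hu0 : 0 < u0) : kf u0 r n ≤ n := by
  unfold kf
  have h : n - u0 + r < (r + 1) * (n + 1) := by
    have : (r+1) * (n+1) = r*n + r + n + 1 := by ring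
    omega
  exact Nat.lt_succ_iff.mp (Nat.div_lt_of_lt_mul h)

private lemma kf_zero (u0 r : ℕ) (hu0 : 0 < u0) : kf u0 r 0 = 0 := by
  unfold kf
  rw [Nat.zero_sub, Nat.zero_add, Nat.div_eq_of_lt (by omega)]

private lemma kf_mono_succ (u0 r n : ℕ) :
    kf u0 r n ≤ kf u0 r (n+1) ∧ kf u0 r (n+1) ≤ kf u0 r n + 1 := by
  unfold kf
  constructor
  · exact Nat.div_le_div_right (by omega)
  · calc (n + 1 - u0 + r) / (r + 1) ≤ (n - u0 + r + (r+1)) / (r + 1) :=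
        Nat.div_le_div_right (by omega)
      _ = (n - u0 + r) / (r + 1) + 1 := Nat.add_div_right _ (by omega)

private lemma kf_incr (u0 r n : ℕ) (h : kf u0 r n + 1 ≤ kf u0 r (n+1)) :
    u0 + kf u0 r n * (r + 1) ≤ n := by
  have h2 : (kf u0 r n + 1) * (r + 1) ≤ n + 1 - u0 + r := by
    have := (Nat.le_div_iff_mul_le (show 0 < r + 1 by omega)).mp h
    exact this
  have h3 : (kf u0 r n + 1) * (r + 1) = kf u0 r n * (r+1) + (r + 1) := by ring
  set p := kf u0 r n * (r + 1)
  omega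

private lemma prod_lower (u0 r : ℕ) (hu0 : 0 < u0) (hr0 : 0 < r) : ∀ n : ℕ,
    u0 * (r+1)^n * (n - kf u0 r n).factorial ≤
      ∏ j ∈ Finset.range (n - kf u0 r n + 1), (u0 + (kf u0 r n + j) * r) := by
  intro n
  induction n with
  | zero => simp [kf_zero u0 r hu0]
  | succ n ih =>
    have hm := kf_mono_succ u0 r n
    have hkn := kf_le u0 r n hu0
    set k := kf u0 r n with hk
    rcases eq_or_lt_of_le hm.1 with heq | hlt
    · -- kf (n+1) = k
      have hk' : kf u0 r (n+1) = k := heq.symm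
      rw [hk']
      have hmm : n + 1 - k = (n - k) + 1 := by omega
      rw [hmm, Finset.prod_range_succ, Nat.factorial_succ]
      have hspec := kf_spec u0 r (n+1)
      rw [hk'] at hspec
      have hfac : u0 + (k + (n - k + 1)) * r = u0 + (n+1) * r := by
        congr 2; omega
      rw [hfac]
      have hkey : (n - k + 1) * (r + 1) ≤ u0 + (n+1) * r := by
        zify [hkn]
        nlinarith [hspec]
      calc u0 * (r+1)^(n+1) * ((n - k + 1) * (n - k).factorial)
          = (u0 * (r+1)^n * (n - k).factorial) * ((n - k + 1) * (r+1)) := by ring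
        _ ≤ (∏ j ∈ Finset.range (n - k + 1), (u0 + (k + j) * r)) * (u0 + (n+1) * r) :=
            Nat.mul_le_mul ih hkey
    · -- kf (n+1) = k + 1
      have hk' : kf u0 r (n+1) = k + 1 := by omega
      have hincr := kf_incr u0 r n (by omega)
      rw [← hk] at hincr
      rw [hk']
      have hmm : n + 1 - (k + 1) = n - k := by omega
      rw [hmm]
      have htel : (∏ j ∈ Finset.range (n - k + 1), (u0 + (k + 1 + j) * r)) * (u0 + k * r)
          = (∏ j ∈ Finset.range (n - k + 1), (u0 + (k + j) * r)) * (u0 + (n+1) * r) := by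
        have h1 : ∏ j ∈ Finset.range (n - k + 1 + 1), (u0 + (k + j) * r)
            = (∏ j ∈ Finset.range (n - k + 1), (u0 + (k + (j+1)) * r)) * (u0 + (k + 0) * r) :=
          Finset.prod_range_succ' _ _
        have h2 : ∏ j ∈ Finset.range (n - k + 1 + 1), (u0 + (k + j) * r)
            = (∏ j ∈ Finset.range (n - k + 1), (u0 + (k + j) * r)) * (u0 + (k + (n - k + 1)) * r) :=
          Finset.prod_range_succ _ _
        have h3 : ∀ j ∈ Finset.range (n - k + 1), u0 + (k + (j+1)) * r = u0 + (k + 1 + j) * r := by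
          intro j _; congr 2; omega
        rw [Finset.prod_congr rfl h3] at h1
        have h4 : u0 + (k + (n - k + 1)) * r = u0 + (n+1) * r := by congr 2; omega
        rw [h4] at h2
        simp only [Nat.add_zero] at h1
        rw [← h1, h2]
      have hkey : (u0 + k * r) * (r + 1) ≤ u0 + (n+1) * r := by
        zify
        nlinarith [hincr, hr0]
      have hchain : (u0 * (r+1)^(n+1) * (n - k).factorial) * (u0 + k * r)
          ≤ (∏ j ∈ Finset.range (n - k + 1), (u0 + (k + 1 + j) * r)) * (u0 + k * r) := by
        rw [htel]
        calc u0 * (r+1)^(n+1) * (n - k).factorial * (u0 + k * r)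
            = (u0 * (r+1)^n * (n - k).factorial) * ((u0 + k * r) * (r+1)) := by ring
          _ ≤ (∏ j ∈ Finset.range (n - k + 1), (u0 + (k + j) * r)) * (u0 + (n+1) * r) :=
              Nat.mul_le_mul ih hkey
      exact Nat.le_of_mul_le_mul_right hchain (by positivity)

theorem main_lower_bound (u0 r n a l α : ℕ) (hu0 : 0 < u0) (hr0 : 0 < r)
    (hgcd : Nat.gcd u0 r = 1) (ha : 2 ≤ a) (hl : 2 ≤ l) (hα : a ≤ α)
    (hr : max a (l - 1) ≤ r) (hn : l * α * r ≤ n) :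
    Finset.lcm (Finset.range (n + 1)) (fun k => u0 + k * r) ≥
      u0 * r ^ ((l - 1) * α + a - l) * (r + 1) ^ n := by
  have hra : a ≤ r := le_trans (le_max_left _ _) hr
  have hrl : l - 1 ≤ r := le_trans (le_max_right _ _) hr
  set E := (l - 1) * α + a - l with hE
  set L := Finset.lcm (Finset.range (n + 1)) (fun k => u0 + k * r) with hL
  set k := kf u0 r n with hkdef
  set m := n - k with hmdef
  set t := m / r with htdef
  have hkle : k ≤ n := kf_le u0 r n hu0
  -- key numeric inequality : E*(r+1) + 1 ≤ l*α*r
  have hkey : E * (r + 1) + 1 ≤ l * α * r := by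
    have hle : l ≤ (l - 1) * α + a := by
      have h2 : 2 * (l - 1) ≤ (l - 1) * α := by
        rw [mul_comm]
        exact Nat.mul_le_mul_left _ (by omega)
      omega
    have hEZ : (E : ℤ) = (l - 1 : ℕ) * α + a - l := by
      rw [hE]
      omega
    zify
    rw [hEZ]
    have hl1 : ((l : ℤ) - 1 : ℤ) = ((l - 1 : ℕ) : ℤ) := by omega
    have h1 : (0:ℤ) ≤ (α : ℤ) - a := by omega
    have h2 : (0:ℤ) ≤ (r : ℤ) + 1 - l := by omega
    have h3 : (0:ℤ) ≤ (r : ℤ) - a := by omega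
    rw [← hl1]
    nlinarith [mul_nonneg h1 h2, mul_nonneg (show (0:ℤ) ≤ (l:ℤ) by omega) h3]
  -- m is large : E * r < m
  have hk_ub : k * (r + 1) ≤ n + r - 1 := by
    have := Nat.div_mul_le_self (n - u0 + r) (r + 1)
    rw [hkdef]
    unfold kf
    omega
  have hm_lb : n * r + 1 ≤ m * (r + 1) + r := by
    have hsum : m + k = n := by omega
    have hex : (m + k) * (r + 1) = m * (r + 1) + k * (r + 1) := by ring
    have hex2 : n * (r + 1) = n * r + n := by ring
    rw [hsum] at hex
    omega
  have hErm : E * r < m := by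
    have hb1 : l * α * r * r ≤ n * r := Nat.mul_le_mul_right r hn
    have hb2 : (E * (r + 1) + 1) * r ≤ l * α * r * r := Nat.mul_le_mul_right r hkey
    have hex : (E * (r + 1) + 1) * r = E * r * (r + 1) + r := by ring
    have hfin : E * r * (r + 1) < m * (r + 1) := by omega
    exact Nat.lt_of_mul_lt_mul_right hfin
  have hEt : E ≤ t := (Nat.le_div_iff_mul_le hr0).mpr (le_of_lt hErm)
  -- divisibility chain
  set P := ∏ j ∈ Finset.range (m + 1), (u0 + (k + j) * r) with hP
  have hPdvd : P ∣ m.factorial * L := prod_dvd_fact_mul_lcm u0 r n k m (by omega) hgcd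
  obtain ⟨D, hD⟩ := pow_div_dvd_factorial r m hr0
  rw [htdef.symm] at hD
  have hcopP : P.Coprime (r ^ t) := by
    apply Nat.Coprime.pow_right
    apply Nat.Coprime.prod_left
    intro j _
    exact (Nat.coprime_add_mul_right_left u0 r (k + j)).mpr hgcd
  have hPdvd2 : P ∣ D * L := by
    apply hcopP.dvd_of_dvd_mul_right
    have : D * L * r ^ t = m.factorial * L := by rw [hD]; ring
    rw [this]
    exact hPdvd
  have hL0 : 0 < L := by
    rcases Nat.eq_zero_or_pos L with h0 | h
    · exfalso
      rw [hL, Finset.lcm_eq_zero_iff] at h0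
      obtain ⟨x, _, hx⟩ := h0
      omega
    · exact h
  have hD0 : 0 < D := by
    rcases Nat.eq_zero_or_pos D with h0 | h
    · exfalso; rw [h0, mul_zero] at hD; exact Nat.factorial_ne_zero m hD
    · exact h
  have hP_lb : u0 * (r + 1) ^ n * m.factorial ≤ P := prod_lower u0 r hu0 hr0 n
  have hP_le : P ≤ D * L := Nat.le_of_dvd (by positivity) hPdvd2
  have hmain : u0 * (r + 1) ^ n * r ^ t ≤ L := by
    have hc : (u0 * (r + 1) ^ n * r ^ t) * D ≤ L * D := by
      calc (u0 * (r + 1) ^ n * r ^ t) * D = u0 * (r + 1) ^ n * (r ^ t * D) := by ring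
        _ = u0 * (r + 1) ^ n * m.factorial := by rw [← hD]
        _ ≤ P := hP_lb
        _ ≤ D * L := hP_le
        _ = L * D := by ring
    exact Nat.le_of_mul_le_mul_right hc hD0
  calc u0 * r ^ E * (r + 1) ^ n ≤ u0 * r ^ t * (r + 1) ^ n := by
        apply Nat.mul_le_mul_right
        exact Nat.mul_le_mul_left u0 (Nat.pow_le_pow_right (by omega) hEt)
    _ = u0 * (r + 1) ^ n * r ^ t := by ring
    _ ≤ L := hmain
end

section
/- Let a ≥ 2 be an integer. For any integers α, r ≥ a and n ≥ 2·α·r, we have L_n ≥ u_0 · r^(α + a - 2) · (r+1)^n. -/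
open Finset Nat

lemma hk_pf (r : ℕ) : ∀ (m : ℕ) (x : ℚ), 0 < x →
    (∑ i ∈ Finset.range (m+1), ((-1:ℚ)^i * ((m.choose i : ℕ) : ℚ)) / (x + i*r))
      = (m ! : ℚ) * (r:ℚ)^m / (∏ i ∈ Finset.range (m+1), (x + i*r)) := by
  intro m
  induction m with
  | zero => intro x hx; simp
  | succ m ih =>
    intro x hx
    have hvr : ∀ (y : ℚ), 0 < y → ∀ j : ℕ, (0:ℚ) < y + (j:ℚ)*r := by
      intro y hy j; positivity
    have hxr : 0 < x + (r:ℚ) := by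
      have := hvr x hx 1; simpa using this
    have hPpos : ∀ (y : ℚ), 0 < y → ∀ mm : ℕ, 0 < ∏ i ∈ Finset.range (mm+1), (y + i*r) := by
      intro y hy mm
      exact Finset.prod_pos (fun i _ => hvr y hy i)
    -- split the sum
    have hsplit :
        (∑ i ∈ Finset.range (m+2), ((-1:ℚ)^i * (((m+1).choose i : ℕ) : ℚ)) / (x + i*r))
          = (∑ i ∈ Finset.range (m+1), ((-1:ℚ)^i * ((m.choose i : ℕ) : ℚ)) / (x + i*r))
            - (∑ i ∈ Finset.range (m+1), ((-1:ℚ)^i * ((m.choose i : ℕ) : ℚ)) / ((x + r) + i*r)) := by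
      rw [Finset.sum_range_succ']
      have h1 : ∀ i ∈ Finset.range (m+1),
          ((-1:ℚ)^(i+1) * (((m+1).choose (i+1) : ℕ) : ℚ)) / (x + (i+1:ℕ)*r)
            = -(((-1:ℚ)^i * ((m.choose i : ℕ) : ℚ)) / (x + (i+1)*r))
              - (((-1:ℚ)^i * ((m.choose (i+1) : ℕ) : ℚ)) / (x + (i+1)*r)) := by
        intro i _
        rw [Nat.choose_succ_succ]
        push_cast
        ring
      rw [Finset.sum_congr rfl h1]
      have hS1' : (∑ i ∈ Finset.range (m+1), ((-1:ℚ)^i * ((m.choose i : ℕ) : ℚ)) / (x + i*r))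
          = ((-1:ℚ)^(0:ℕ) * (((m+1).choose 0 : ℕ) : ℚ)) / (x + ((0:ℕ):ℚ)*r)
            - ∑ i ∈ Finset.range (m+1), (((-1:ℚ)^i * ((m.choose (i+1) : ℕ) : ℚ)) / (x + (i+1:ℕ)*r)) := by
        rw [Finset.sum_range_succ' (fun i => ((-1:ℚ)^i * ((m.choose i : ℕ) : ℚ)) / (x + i*r)) m]
        rw [Finset.sum_range_succ (fun i => (((-1:ℚ)^i * ((m.choose (i+1) : ℕ) : ℚ)) / (x + (i+1:ℕ)*r))) m]
        simp only [Nat.choose_succ_self, Nat.cast_zero, mul_zero, zero_div, add_zero,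
          Nat.choose_zero_right, Nat.cast_one]
        push_cast
        apply eq_sub_of_add_eq
        rw [add_right_comm, add_eq_right, ← Finset.sum_add_distrib]
        apply Finset.sum_eq_zero
        intro i _
        push_cast
        ring
      have hS2 : (∑ i ∈ Finset.range (m+1), ((-1:ℚ)^i * ((m.choose i : ℕ) : ℚ)) / ((x + r) + i*r))
          = ∑ i ∈ Finset.range (m+1), (((-1:ℚ)^i * ((m.choose i : ℕ) : ℚ)) / (x + (i+1:ℕ)*r)) := by
        apply Finset.sum_congr rfl
        intro i _
        push_cast
        ring_nf
      rw [hS1', hS2, Finset.sum_sub_distrib, Finset.sum_neg_distrib]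
      push_cast
      ring
    rw [hsplit, ih x hx, ih (x+r) hxr]
    have hp : (0:ℚ) < ∏ i ∈ Finset.range (m+1), (x + i*r) := hPpos x hx m
    have hq : (0:ℚ) < ∏ i ∈ Finset.range (m+1), ((x+r) + i*r) := hPpos (x+r) hxr m
    have hM : (0:ℚ) < x + ((m+1:ℕ):ℚ)*r := hvr x hx (m+1)
    have hprod1 : (∏ i ∈ Finset.range (m+1+1), (x + i*r))
        = (∏ i ∈ Finset.range (m+1), (x + i*r)) * (x + ((m+1:ℕ):ℚ)*r) :=
      Finset.prod_range_succ _ _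
    have hprod2 : (∏ i ∈ Finset.range (m+1), ((x+r) + i*r)) * x
        = (∏ i ∈ Finset.range (m+1), (x + i*r)) * (x + ((m+1:ℕ):ℚ)*r) := by
      rw [← hprod1, Finset.prod_range_succ' (fun i : ℕ => x + (i:ℚ)*(r:ℚ)) (m+1)]
      simp only [Nat.cast_zero, zero_mul, add_zero]
      congr 1
      apply Finset.prod_congr rfl
      intro i _
      push_cast
      ring
    rw [div_sub_div _ _ hp.ne' hq.ne', hprod1, div_eq_div_iff (by positivity) (by positivity)]
    rw [Nat.factorial_succ]
    push_cast
    push_cast at hprod2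
    linear_combination ((m ! : ℚ) * (r:ℚ)^m * (∏ i ∈ Finset.range (m+1), (x + i*r))) * hprod2

lemma hk_dvd (u0 r n : ℕ) (hu0 : 0 < u0) (hgcd : Nat.gcd u0 r = 1) (k m : ℕ)
    (hkm : k + m ≤ n) :
    (∏ i ∈ Finset.range (m+1), (u0 + (k+i)*r)) ∣
      m ! * Finset.lcm (Finset.range (n+1)) (fun j => u0 + j*r) := by
  set L := Finset.lcm (Finset.range (n+1)) (fun j => u0 + j*r) with hL
  have hdvdL : ∀ i, i ≤ m → (u0 + (k+i)*r) ∣ L := by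
    intro i hi
    exact Finset.dvd_lcm (by simp only [Finset.mem_range]; omega)
  have hupos : ∀ i : ℕ, 0 < u0 + (k+i)*r := fun i => Nat.lt_of_lt_of_le hu0 (Nat.le_add_right _ _)
  set c : ℕ → ℕ := fun i => L / (u0 + (k+i)*r) with hcdef
  have hc : ∀ i, i ≤ m → (u0 + (k+i)*r) * c i = L := by
    intro i hi
    exact Nat.mul_div_cancel' (hdvdL i hi)
  have hx : (0:ℚ) < (u0:ℚ) + (k:ℚ)*(r:ℚ) := by
    have : (0:ℚ) < (u0:ℚ) := by exact_mod_cast hu0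
    positivity
  have hid := hk_pf r m ((u0:ℚ) + (k:ℚ)*(r:ℚ)) hx
  have hterm : ∀ i : ℕ, ((u0:ℚ) + (k:ℚ)*r) + (i:ℚ)*r = ((u0 + (k+i)*r : ℕ) : ℚ) := by
    intro i; push_cast; ring
  have hPpos : (0:ℚ) < ∏ i ∈ Finset.range (m+1), (((u0:ℚ) + (k:ℚ)*r) + (i:ℚ)*r) := by
    apply Finset.prod_pos; intro i _; positivity
  -- multiply identity by L and the product
  have hz : ((∑ i ∈ Finset.range (m+1), ((-1:ℤ)^i * ((m.choose i : ℕ):ℤ) * (c i : ℤ))) : ℚ)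
      * (∏ i ∈ Finset.range (m+1), (((u0:ℚ) + (k:ℚ)*r) + (i:ℚ)*r))
      = ((m ! * r^m * L : ℕ) : ℚ) := by
    push_cast
    have h1 : (∑ i ∈ Finset.range (m+1), ((-1:ℚ)^i * ((m.choose i : ℕ):ℚ) * ((c i : ℕ):ℚ)))
        = (∑ i ∈ Finset.range (m+1), ((-1:ℚ)^i * ((m.choose i : ℕ):ℚ)) / (((u0:ℚ) + (k:ℚ)*r) + (i:ℚ)*r)) * (L:ℚ) := by
      rw [Finset.sum_mul]
      apply Finset.sum_congr rfl
      intro i hi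
      have hi' : i ≤ m := by simpa using Nat.lt_succ_iff.mp (Finset.mem_range.mp hi)
      have hcL : (((u0 + (k+i)*r : ℕ)):ℚ) * ((c i : ℕ):ℚ) = (L:ℚ) := by exact_mod_cast hc i hi'
      have hne : (((u0:ℚ) + (k:ℚ)*r) + (i:ℚ)*r) ≠ 0 := by positivity
      rw [div_mul_eq_mul_div, eq_div_iff hne]
      rw [hterm i] at hne ⊢
      push_cast
      push_cast at hcL
      linear_combination ((-1:ℚ)^i * ((m.choose i : ℕ):ℚ)) * hcL
    rw [h1, hid, div_mul_eq_mul_div, div_mul_eq_mul_div, eq_comm, eq_div_iff hPpos.ne']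
  have hdvd2 : (∏ i ∈ Finset.range (m+1), (u0 + (k+i)*r)) ∣ m ! * r^m * L := by
    have hcast : ((∏ i ∈ Finset.range (m+1), (u0 + (k+i)*r) : ℕ) : ℚ)
        = ∏ i ∈ Finset.range (m+1), (((u0:ℚ) + (k:ℚ)*r) + (i:ℚ)*r) := by
      push_cast
      apply Finset.prod_congr rfl
      intro i _
      ring
    set z : ℤ := (∑ i ∈ Finset.range (m+1), ((-1:ℤ)^i * ((m.choose i : ℕ):ℤ) * (c i : ℤ))) with hzdef
    have hQ : ((m ! * r^m * L : ℕ) : ℚ) = ((∏ i ∈ Finset.range (m+1), (u0 + (k+i)*r) : ℕ):ℚ) * ((z:ℤ):ℚ) := by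
      rw [hcast, ← hz, hzdef]
      push_cast
      ring
    have hz2 : ((m ! * r^m * L : ℕ) : ℤ) = ((∏ i ∈ Finset.range (m+1), (u0 + (k+i)*r) : ℕ) : ℤ) * z := by
      exact_mod_cast hQ
    exact Int.natCast_dvd_natCast.mp ⟨z, hz2⟩
  have hcop : Nat.Coprime (∏ i ∈ Finset.range (m+1), (u0 + (k+i)*r)) r := by
    apply Nat.Coprime.prod_left
    intro i _
    exact (Nat.coprime_add_mul_right_left u0 r (k+i)).mpr hgcd
  have : (∏ i ∈ Finset.range (m+1), (u0 + (k+i)*r)) ∣ (m ! * L) * r^m := by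
    calc (∏ i ∈ Finset.range (m+1), (u0 + (k+i)*r)) ∣ m ! * r^m * L := hdvd2
    _ = (m ! * L) * r^m := by ring
  exact (Nat.Coprime.pow_right m hcop).dvd_of_dvd_mul_right this

lemma hk_choice (u0 r : ℕ) (hu0 : 0 < u0) (hr : 1 ≤ r) : ∀ n : ℕ, ∃ k m : ℕ, k + m = n ∧
    (r+1)*k + 1 ≤ n + r ∧
    m ! * (u0 * (r+1)^n) ≤ ∏ i ∈ Finset.range (m+1), (u0 + (k+i)*r) := by
  intro n
  induction n with
  | zero =>
    refine ⟨0, 0, rfl, by omega, ?_⟩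
    simp
  | succ n ih =>
    obtain ⟨k, m, hkm, hinv, hbound⟩ := ih
    by_cases hstay : n + 1 ≤ u0 + k*r + k
    · refine ⟨k, m+1, by omega, by omega, ?_⟩
      have hprod : (∏ i ∈ Finset.range (m+1+1), (u0 + (k+i)*r))
          = (∏ i ∈ Finset.range (m+1), (u0 + (k+i)*r)) * (u0 + (k+(m+1))*r) :=
        Finset.prod_range_succ _ _
      rw [hprod]
      have hfac : (m+1)! * (u0 * (r+1)^(n+1)) = (m ! * (u0 * (r+1)^n)) * ((m+1)*(r+1)) := by
        rw [Nat.factorial_succ]; ring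
      rw [hfac]
      apply Nat.mul_le_mul hbound
      nlinarith [hstay, hkm]
    · push_neg at hstay
      refine ⟨k+1, m, by omega, by nlinarith [hstay, hu0], ?_⟩
      have hukr : u0 + k*r ≤ m := by omega
      have hpos : 0 < u0 + k*r := by omega
      apply Nat.le_of_mul_le_mul_right _ hpos
      have hQ : (∏ i ∈ Finset.range (m+1), (u0 + ((k+1)+i)*r)) * (u0 + k*r)
          = (∏ i ∈ Finset.range (m+1), (u0 + (k+i)*r)) * (u0 + (k+(m+1))*r) := by
        have h1 : (∏ i ∈ Finset.range (m+1+1), (u0 + (k+i)*r))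
            = (∏ i ∈ Finset.range (m+1), (u0 + (k+i)*r)) * (u0 + (k+(m+1))*r) :=
          Finset.prod_range_succ _ _
        have h2 : (∏ i ∈ Finset.range (m+1+1), (u0 + (k+i)*r))
            = (∏ i ∈ Finset.range (m+1), (u0 + (k+(i+1))*r)) * (u0 + (k+0)*r) :=
          Finset.prod_range_succ' _ _
        have h3 : (∏ i ∈ Finset.range (m+1), (u0 + (k+(i+1))*r))
            = (∏ i ∈ Finset.range (m+1), (u0 + ((k+1)+i)*r)) := by
          apply Finset.prod_congr rfl
          intro i _
          have h4 : k+(i+1) = (k+1)+i := by omega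
          rw [h4]
        rw [← h1, h2, h3]
        simp
      rw [hQ]
      have hkey : (r+1)*(u0 + k*r) ≤ u0 + (k+(m+1))*r := by nlinarith [hukr]
      calc m ! * (u0 * (r+1)^(n+1)) * (u0 + k*r)
          = (m ! * (u0 * (r+1)^n)) * ((r+1)*(u0 + k*r)) := by ring
        _ ≤ (∏ i ∈ Finset.range (m+1), (u0 + (k+i)*r)) * (u0 + (k+(m+1))*r) :=
            Nat.mul_le_mul hbound hkey

lemma hk_rpow_dvd (r : ℕ) (hr : 1 ≤ r) : ∀ N : ℕ, r^N ∣ (N*r)! := by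
  intro N
  induction N with
  | zero => simp
  | succ N ih =>
    have h1 : r^(N+1) = r^N * r := by ring
    have h2 : (N+1)*r = N*r + r := by ring
    rw [h1, h2]
    exact Nat.mul_dvd_mul ih (Nat.dvd_factorial hr le_rfl) |>.trans
      (Nat.factorial_mul_factorial_dvd_factorial_add _ _)

lemma hk_arith (r n a α k m : ℕ) (ha : 2 ≤ a) (hα : a ≤ α) (hr : a ≤ r)
    (hn : 2*α*r ≤ n) (hkm : k + m = n) (hinv : (r+1)*k + 1 ≤ n + r) :
    (α + a - 2) * r ≤ m := by
  obtain ⟨s, hs⟩ : ∃ s, α = a + s := ⟨α - a, by omega⟩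
  obtain ⟨t, ht⟩ : ∃ t, r = a + t := ⟨r - a, by omega⟩
  obtain ⟨a2, ha2⟩ : ∃ a2, a = a2 + 2 := ⟨a - 2, by omega⟩
  obtain ⟨N', hN'⟩ : ∃ N', α + a - 2 = N' := ⟨α + a - 2, rfl⟩
  have hN4 : N' + 2 = 2*a + s := by omega
  rw [hN']
  have key : N'*(r+1) + 1 ≤ 2*α*r := by
    have expand : (N' + 2)*(r+1) + 1 + (s*(a2+1) + s*t + 2*t + 1) = 2*α*r + 2*(r+1) := by
      rw [hN4, hs, ht, ha2]
      ring
    nlinarith [expand]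
  have e1 : k*(r+1) + m*(r+1) = n*r + n := by
    have e0 : (k+m)*(r+1) = k*(r+1) + m*(r+1) := by ring
    rw [← e0, hkm]
    ring
  have h5 : n*r + 1 ≤ m*(r+1) + r := by nlinarith [hinv, e1]
  have k1 : (N'*(r+1) + 1) * r ≤ (2*α*r) * r := Nat.mul_le_mul_right r key
  have k2 : (2*α*r) * r ≤ n * r := Nat.mul_le_mul_right r hn
  have k3 : N'*r*(r+1) + r ≤ n*r := by
    have e2 : (N'*(r+1) + 1) * r = N'*r*(r+1) + r := by ring
    omega
  have h6 : (N'*r)*(r+1) ≤ m*(r+1) := by nlinarith [k3, h5]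
  exact Nat.le_of_mul_le_mul_right h6 (by omega : 0 < r+1)

theorem hong_kominers_bound (u0 r n a α : ℕ) (hu0 : 0 < u0)
    (hgcd : Nat.gcd u0 r = 1) (ha : 2 ≤ a) (hα : a ≤ α) (hr : a ≤ r)
    (hn : 2 * α * r ≤ n) :
    Finset.lcm (Finset.range (n + 1)) (fun k => u0 + k * r) ≥
      u0 * r ^ (α + a - 2) * (r + 1) ^ n := by
  have hr1 : 1 ≤ r := by omega
  obtain ⟨k, m, hkm, hinv, hbound⟩ := hk_choice u0 r hu0 hr1 n
  set L := Finset.lcm (Finset.range (n + 1)) (fun k => u0 + k * r) with hLdef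
  set P := ∏ i ∈ Finset.range (m+1), (u0 + (k+i)*r) with hPdef
  set N := α + a - 2 with hNdef
  have hN2 : N + 2 = α + a := by omega
  -- L positive
  have hLpos : 0 < L := by
    have h1 : L ∣ ∏ j ∈ Finset.range (n+1), (u0 + j*r) := by
      apply Finset.lcm_dvd
      intro b hb
      exact Finset.dvd_prod_of_mem _ hb
    have h2 : 0 < ∏ j ∈ Finset.range (n+1), (u0 + j*r) :=
      Finset.prod_pos (fun j _ => by positivity)
    rcases Nat.eq_zero_or_pos L with h | h
    · rw [h] at h1; exact absurd (Nat.eq_zero_of_zero_dvd h1) (by omega)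
    · exact h
  have hNm : N * r ≤ m := hk_arith r n a α k m ha hα hr hn hkm hinv
  have hfdvd : r^N ∣ m ! :=
    (hk_rpow_dvd r hr1 N).trans (Nat.factorial_dvd_factorial hNm)
  have hdvd : P ∣ m ! * L := hk_dvd u0 r n hu0 hgcd k m (by omega)
  have hcop : Nat.Coprime P (r^N) := by
    apply Nat.Coprime.pow_right
    apply Nat.Coprime.prod_left
    intro i _
    exact (Nat.coprime_add_mul_right_left u0 r (k+i)).mpr hgcd
  have hPr : P * r^N ∣ m ! * L :=
    Nat.Coprime.mul_dvd_of_dvd_of_dvd hcop hdvd (Dvd.dvd.mul_right hfdvd L)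
  have hle : P * r^N ≤ m ! * L :=
    Nat.le_of_dvd (Nat.mul_pos (Nat.factorial_pos m) hLpos) hPr
  have hfinal : m ! * (u0 * r^N * (r+1)^n) ≤ m ! * L := by
    calc m ! * (u0 * r^N * (r+1)^n) = (m ! * (u0 * (r+1)^n)) * r^N := by ring
      _ ≤ P * r^N := Nat.mul_le_mul_right _ hbound
      _ ≤ m ! * L := hle
  exact Nat.le_of_mul_le_mul_left hfinal (Nat.factorial_pos m)
end
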